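/- Let h > 0 and α ∈ (0,1]. Define φ_α(p) = (α/(α-1))(1 − p^{(α-1)/α}) for α ≠ 1 (and φ_1(p) = −log p). Then t ↦ φ_α(σ(t)) is C_h(α)-Lipschitz on [−h, h], where C_h(α) = σ(h)·σ(−h)^{(α-1)/α} and σ is the sigmoid. -/

import Mathlib

noncomputable def sigmoid (t : ℝ) : ℝ := 1 / (1 + Real.exp (-t))

noncomputable def phiAlpha (α : ℝ) (p : ℝ) : ℝ :=
  if α = 1 then -Real.log p else (α / (α - 1)) * (1 - p ^ ((α - 1)/α))

lemma sigmoid_pos (t : ℝ) : 0 < sigmoid t := by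
  unfold sigmoid
  positivity

lemma sigmoid_lt_one (t : ℝ) : sigmoid t < 1 := by
  unfold sigmoid
  rw [div_lt_one (by positivity)]
  linarith [Real.exp_pos (-t)]

lemma sigmoid_mono : Monotone sigmoid := by
  intro a b hab
  unfold sigmoid
  have h1 : (0:ℝ) < 1 + Real.exp (-b) := by positivity
  apply div_le_div_of_nonneg_left (by norm_num) h1
  have := Real.exp_le_exp.mpr (neg_le_neg hab)
  linarith

lemma one_sub_sigmoid (t : ℝ) : 1 - sigmoid t = sigmoid (-t) := by
  unfold sigmoid
  rw [neg_neg]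
  have h1 : (0:ℝ) < 1 + Real.exp (-t) := by positivity
  have h2 : (0:ℝ) < 1 + Real.exp t := by positivity
  have he : Real.exp (-t) * Real.exp t = 1 := by
    rw [← Real.exp_add]; simp
  field_simp
  nlinarith [he]

lemma hasDerivAt_sigmoid (t : ℝ) :
    HasDerivAt sigmoid (sigmoid t * (1 - sigmoid t)) t := by
  have h1 : (0:ℝ) < 1 + Real.exp (-t) := by positivity
  have hd : HasDerivAt (fun s : ℝ => 1 + Real.exp (-s)) (Real.exp (-t) * (-1)) t := by
    have := ((Real.hasDerivAt_exp (-t)).comp t (hasDerivAt_neg t))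
    simpa using this.const_add 1
  have := hd.inv h1.ne'
  convert this using 1
  rfl
  rfl
  · funext s; simp [sigmoid, one_div]
  · unfold sigmoid
    field_simp
    ring

lemma hasDerivAt_phi (α : ℝ) (hα : α ∈ Set.Ioc (0:ℝ) 1) (t : ℝ) :
    HasDerivAt (fun s => phiAlpha α (sigmoid s))
      (-(sigmoid t ^ ((α - 1)/α) * (1 - sigmoid t))) t := by
  obtain ⟨hα0, hα1⟩ := hα
  rcases eq_or_lt_of_le hα1 with h1 | h1
  · -- α = 1
    have hφ : (fun s => phiAlpha α (sigmoid s)) = fun s => -Real.log (sigmoid s) := by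
      funext s; simp [phiAlpha, h1.symm]
    rw [hφ]
    have := ((Real.hasDerivAt_log (sigmoid_pos t).ne').comp t (hasDerivAt_sigmoid t)).neg
    subst h1
    convert this using 1
    rfl
    rfl
    norm_num
    field_simp [(sigmoid_pos t).ne']
    · rfl
    · rw [sub_self, zero_div, Real.rpow_zero, inv_mul_cancel_left₀ (sigmoid_pos t).ne', one_mul]
  · -- α < 1
    have hαne : α ≠ 1 := h1.ne
    have hne : α - 1 ≠ 0 := sub_ne_zero.mpr hαne
    have hφ : (fun s => phiAlpha α (sigmoid s)) =
        fun s => (α / (α - 1)) * (1 - sigmoid s ^ ((α - 1)/α)) := by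
      funext s; simp [phiAlpha, hαne]
    rw [hφ]
    have hd := ((hasDerivAt_sigmoid t).rpow_const (p := (α - 1)/α) (Or.inl (sigmoid_pos t).ne')).const_sub 1
    have := hd.const_mul (α / (α - 1))
    convert this using 1
    rfl
    rfl
    rw [Real.rpow_sub_one (sigmoid_pos t).ne']
    have hσ : sigmoid t ≠ 0 := (sigmoid_pos t).ne'
    have hcb : α / (α - 1) * ((α - 1)/α) = 1 := by
      field_simp
    have e1 : sigmoid t * (1 - sigmoid t) * ((α - 1)/α) *
        (sigmoid t ^ ((α - 1)/α) / sigmoid t)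
        = (α - 1)/α * (sigmoid t ^ ((α - 1)/α) * (1 - sigmoid t)) := by
      field_simp
    rw [e1, mul_neg, ← mul_assoc, hcb, one_mul]

theorem alpha_loss_sigmoid_lipschitz (h α : ℝ) (hh : 0 < h)
    (hα : α ∈ Set.Ioc (0:ℝ) 1) :
    ∀ s ∈ Set.Icc (-h) h, ∀ t ∈ Set.Icc (-h) h,
      |phiAlpha α (sigmoid s) - phiAlpha α (sigmoid t)| ≤
        (sigmoid h * sigmoid (-h) ^ ((α - 1)/α)) * |s - t| := by
  intro s hs t ht
  set C := sigmoid h * sigmoid (-h) ^ ((α - 1)/α)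
  have hβ : (α - 1)/α ≤ 0 :=
    div_nonpos_of_nonpos_of_nonneg (by linarith [hα.2]) (le_of_lt hα.1)
  have key : ∀ x ∈ Set.Icc (-h) h,
      ‖-(sigmoid x ^ ((α - 1)/α) * (1 - sigmoid x))‖ ≤ C := by
    intro x hx
    have hnn1 : (0:ℝ) ≤ sigmoid x ^ ((α - 1)/α) := le_of_lt (Real.rpow_pos_of_pos (sigmoid_pos x) _)
    have hnn2 : (0:ℝ) ≤ 1 - sigmoid x := le_of_lt (by linarith [sigmoid_lt_one x])
    rw [norm_neg, Real.norm_eq_abs, abs_of_nonneg (mul_nonneg hnn1 hnn2)]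
    have h1 : sigmoid x ^ ((α - 1)/α) ≤ sigmoid (-h) ^ ((α - 1)/α) :=
      Real.rpow_le_rpow_of_nonpos (sigmoid_pos (-h)) (sigmoid_mono hx.1) hβ
    have h2 : 1 - sigmoid x ≤ sigmoid h := by
      rw [one_sub_sigmoid]
      exact sigmoid_mono (by linarith [hx.1])
    calc sigmoid x ^ ((α - 1)/α) * (1 - sigmoid x)
        ≤ sigmoid (-h) ^ ((α - 1)/α) * sigmoid h := by
          apply mul_le_mul h1 h2 hnn2 (le_of_lt (Real.rpow_pos_of_pos (sigmoid_pos _) _))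
      _ = C := by rw [mul_comm]
  have := Convex.norm_image_sub_le_of_norm_hasDerivWithin_le
    (f := fun s => phiAlpha α (sigmoid s))
    (f' := fun x => -(sigmoid x ^ ((α - 1)/α) * (1 - sigmoid x)))
    (fun x _ => (hasDerivAt_phi α hα x).hasDerivWithinAt)
    key (convex_Icc (-h) h) ht hs
  simpa [Real.norm_eq_abs] using this
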